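/- Let X be a quasi-compact and separated scheme covered by open subschemes U_1, …, U_n with U_n affine, and let u_n : U_n → X denote the inclusion. Let G be a quasi-coherent sheaf on X such that the restriction G|U_i is zero for every 1 ≤ i ≤ n−1. Then the unit morphism c : G → u_{n*}(G|U_n) of the adjunction (u_n^*, u_{n*}) is an isomorphism of quasi-coherent sheaves on X. -/

import Mathlib

/-!
Common setup: the category of quasi-coherent sheaves on a scheme, and the
direct image functor on (quasi-coherent) sheaves of modules induced by a
morphism of schemes.
-/

open CategoryTheory AlgebraicGeometry TopologicalSpace Limits

universe w u

namespace DerivedQCoh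

/-- The morphism of sheaves of rings underlying a morphism of schemes `f : X ⟶ Y`,
given by the structure morphism `f.c`. -/
noncomputable def ringCatSheafHom {X Y : Scheme.{u}} (f : X ⟶ Y) :
    Y.ringCatSheaf ⟶
      ((Opens.map f.base).sheafPushforwardContinuous RingCat.{u}
        (Opens.grothendieckTopology Y) (Opens.grothendieckTopology X)).obj X.ringCatSheaf :=
  ⟨Functor.whiskerRight f.c (forget₂ CommRingCat RingCat)⟩

/-- The direct image functor `f_*` on sheaves of modules induced by a morphism of
schemes `f : X ⟶ Y`. -/
noncomputable def pushforwardModules {X Y : Scheme.{u}} (f : X ⟶ Y) :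
    X.Modules ⥤ Y.Modules :=
  SheafOfModules.pushforward.{u} (ringCatSheafHom f)

/-- `QCoh X` is the category of quasi-coherent sheaves of `O_X`-modules on a
scheme `X`, i.e. the full subcategory of sheaves of modules on `X` consisting of
the quasi-coherent ones. -/
def QCoh (X : Scheme.{u}) : Type (u + 1) :=
  ObjectProperty.FullSubcategory (fun M : X.Modules => M.IsQuasicoherent)

noncomputable instance (X : Scheme.{u}) : Category.{u} (QCoh X) :=
  inferInstanceAs (Category (ObjectProperty.FullSubcategory _))

/-- The underlying sheaf of modules of a quasi-coherent sheaf. -/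
def QCoh.sheaf {X : Scheme.{u}} (M : QCoh X) : X.Modules :=
  ObjectProperty.FullSubcategory.obj M

/-- A quasi-coherent sheaf is quasi-coherent. -/
lemma QCoh.isQuasicoherent {X : Scheme.{u}} (M : QCoh X) : M.sheaf.IsQuasicoherent :=
  ObjectProperty.FullSubcategory.property M

/-- The (fully faithful) inclusion of quasi-coherent sheaves into all sheaves of
modules. -/
noncomputable def QCoh.ι (X : Scheme.{u}) : QCoh X ⥤ X.Modules :=
  ObjectProperty.ι _

/-- The direct image functor `f_* : QCoh X ⥤ QCoh Y` on quasi-coherent sheaves,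
given the fact that the direct image on sheaves of modules preserves
quasi-coherence. -/
noncomputable def pushforwardQCoh {X Y : Scheme.{u}} (f : X ⟶ Y)
    (h : ∀ M : QCoh X, ((pushforwardModules f).obj M.sheaf).IsQuasicoherent) :
    QCoh X ⥤ QCoh Y :=
  ObjectProperty.lift _ (QCoh.ι X ⋙ pushforwardModules f) h

end DerivedQCoh

namespace DerivedQCoh

open Opposite

lemma pmap₂ {C : Type*} [Category C] [Quiver.IsThin C] (P : C ⥤ AddCommGrpCat)
    {A B D : C} (a : A ⟶ B) (b : B ⟶ D) (c : A ⟶ D) (x : P.obj A) :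
    P.map b (P.map a x) = P.map c x := by
  rw [show c = a ≫ b from Subsingleton.elim _ _, P.map_comp]; rfl

variable {Y X : Scheme.{u}} (f : Y ⟶ X) [IsOpenImmersion f]

noncomputable def resRingNat : Y.presheaf ⟶ f.opensFunctor.op ⋙ X.presheaf where
  app W := (f.appIso W.unop).inv
  naturality _ _ i := Scheme.Hom.appIso_inv_naturality f i

noncomputable def resRingCat : Y.ringCatSheaf.val ⟶ f.opensFunctor.op ⋙ X.ringCatSheaf.val :=
  Functor.whiskerRight (resRingNat f) (forget₂ CommRingCat RingCat)

instance : (Functor.IsContinuous.{u} f.opensFunctor (Opens.grothendieckTopology Y)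
    (Opens.grothendieckTopology X)) := f.isOpenEmbedding.functor_isContinuous

noncomputable def resObj (G : X.Modules) : Y.Modules where
  val := (PresheafOfModules.pushforward.{u} (resRingCat f)).obj G.val
  isSheaf := TopCat.Presheaf.isSheaf_of_isOpenEmbedding f.isOpenEmbedding G.isSheaf

lemma hVle (V : Opens X) : f ''ᵁ f ⁻¹ᵁ V ≤ V := Set.image_preimage_subset f.base V.1

noncomputable def resUnit (G : X.Modules) :
    G ⟶ (pushforwardModules f).obj (resObj f G) where
  val :=
    { app := fun V => ModuleCat.ofHom (X := G.val.obj V)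
          (Y := ((pushforwardModules f).obj (resObj f G)).val.obj V)
        { toFun := fun x => G.val.map (homOfLE (hVle f V.unop)).op x
          map_add' := fun a b => map_add (ConcreteCategory.hom (G.val.map (homOfLE (hVle f V.unop)).op)) a b
          map_smul' := by
            intro r x
            show G.val.map (homOfLE (hVle f V.unop)).op (r • x) = _
            show G.val.map (homOfLE (hVle f V.unop)).op (r • x) =
              (show X.ringCatSheaf.val.obj (op (f ''ᵁ f ⁻¹ᵁ V.unop)) from
                ((f.appIso (f ⁻¹ᵁ V.unop)).inv ((f.app V.unop) r))) •
                (show G.val.obj (op (f ''ᵁ f ⁻¹ᵁ V.unop)) from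
                  G.val.map (homOfLE (hVle f V.unop)).op x)
            rw [PresheafOfModules.map_smul]
            congr 1
            exact ConcreteCategory.congr_hom (Scheme.Hom.app_appIso_inv f V.unop).symm (show Γ(X, V.unop) from r) }
      naturality := by
        intro V V' i
        ext x
        exact (pmap₂ G.val.presheaf i (homOfLE (hVle f V'.unop)).op
            (homOfLE ((hVle f V'.unop).trans (leOfHom i.unop))).op x).trans
          (pmap₂ G.val.presheaf (homOfLE (hVle f V.unop)).op
            (f.opensFunctor.op.map ((Opens.map f.base).op.map i))
            (homOfLE ((hVle f V'.unop).trans (leOfHom i.unop))).op x).symm }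

end DerivedQCoh

namespace DerivedQCoh
open Opposite Scheme

lemma pmap₁ {C : Type*} [Category C] [Quiver.IsThin C] (P : C ⥤ AddCommGrpCat)
    {A B : C} (a b : A ⟶ B) (x : P.obj A) : P.map a x = P.map b x := by
  rw [Subsingleton.elim a b]

lemma pmap_self {C : Type*} [Category C] [Quiver.IsThin C] (P : C ⥤ AddCommGrpCat)
    {A B : C} (a : A ⟶ B) (b : B ⟶ A) (x : P.obj A) : P.map b (P.map a x) = x := by
  rw [pmap₂ P a b (𝟙 A), P.map_id]; rfl

lemma cmap₂ {C : Type*} [Category C] [Quiver.IsThin C] (P : C ⥤ CommRingCat)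
    {A B D : C} (a : A ⟶ B) (b : B ⟶ D) (c : A ⟶ D) (x : P.obj A) :
    P.map b (P.map a x) = P.map c x := by
  rw [show c = a ≫ b from Subsingleton.elim _ _, P.map_comp]; rfl

lemma cmap_self {C : Type*} [Category C] [Quiver.IsThin C] (P : C ⥤ CommRingCat)
    {A B : C} (a : A ⟶ B) (b : B ⟶ A) (x : P.obj A) : P.map b (P.map a x) = x := by
  rw [cmap₂ P a b (𝟙 A), P.map_id]; rfl

variable {Y X : Scheme.{u}} (f : Y ⟶ X) [IsOpenImmersion f]

/-- The reverse morphism along the universal property. -/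
noncomputable def resDesc (G : X.Modules) {N : Y.Modules}
    (h : G ⟶ (pushforwardModules f).obj N) : resObj f G ⟶ N where
  val :=
    { app := fun W => ModuleCat.ofHom (X := (resObj f G).val.obj W) (Y := N.val.obj W)
        { toFun := fun x => N.val.map (eqToHom (f.preimage_image_eq W.unop).symm).op
            (h.val.app (op (f ''ᵁ W.unop)) x)
          map_add' := by intro a b; exact (congrArg _ (map_add _ a b)).trans (map_add _ _ _)
          map_smul' := by
            intro r x
            show N.val.map (eqToHom (f.preimage_image_eq W.unop).symm).op
                (h.val.app (op (f ''ᵁ W.unop)) ((show X.ringCatSheaf.val.obj (op (f ''ᵁ W.unop)) from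
                    (f.appIso W.unop).inv r) •
                  (show G.val.obj (op (f ''ᵁ W.unop)) from x))) =
              r • N.val.map (eqToHom (f.preimage_image_eq W.unop).symm).op
                (h.val.app (op (f ''ᵁ W.unop)) (show G.val.obj (op (f ''ᵁ W.unop)) from x))
            erw [map_smul, ModuleCat.restrictScalars.smul_def, PresheafOfModules.map_smul]
            congr 1
            refine (congrArg (Y.presheaf.map (eqToHom (f.preimage_image_eq W.unop).symm).op)
              (ConcreteCategory.congr_hom (Scheme.Hom.appIso_inv_app f W.unop) (show Γ(Y, W.unop) from r))).trans ?_
            exact cmap_self Y.presheaf _ _ r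
          }
      naturality := by
        intro W W' i
        ext x
        refine ((congrArg (N.val.presheaf.map (eqToHom (f.preimage_image_eq W'.unop).symm).op)
            (PresheafOfModules.naturality_apply h.val (f.opensFunctor.op.map i) x)).trans
            ?_).trans
          (pmap₂ N.val.presheaf (eqToHom (f.preimage_image_eq W.unop).symm).op i
            (homOfLE ((leOfHom i.unop).trans (f.preimage_image_eq W.unop).symm.le)).op
            ((h.val.app (op (f ''ᵁ W.unop))) x)).symm
        exact pmap₂ N.val.presheaf _ _ _ _ }

end DerivedQCoh

namespace DerivedQCoh
open Opposite
variable {Y X : Scheme.{u}} (f : Y ⟶ X) [IsOpenImmersion f]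

lemma resDesc_fac (G : X.Modules) {N : Y.Modules} (h : G ⟶ (pushforwardModules f).obj N) :
    resUnit f G ≫ (pushforwardModules f).map (resDesc f G h) = h := by
  refine SheafOfModules.hom_ext (PresheafOfModules.hom_ext fun V => ?_); ext x
  refine (congrArg (N.val.presheaf.map
      (eqToHom (f.preimage_image_eq ((Opens.map f.base).obj V.unop)).symm).op)
    (PresheafOfModules.naturality_apply h.val (homOfLE (hVle f V.unop)).op x)).trans ?_
  exact pmap_self N.val.presheaf _ _ _

lemma res_homext (G : X.Modules) {N : Y.Modules} (g₁ g₂ : resObj f G ⟶ N)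
    (hh : resUnit f G ≫ (pushforwardModules f).map g₁ =
      resUnit f G ≫ (pushforwardModules f).map g₂) : g₁ = g₂ := by
  refine SheafOfModules.hom_ext (PresheafOfModules.hom_ext fun W => ?_); ext x
  have key : ∀ g : resObj f G ⟶ N,
      N.val.presheaf.map (homOfLE (f.preimage_image_eq W.unop).le).op (g.val.app W x) =
      g.val.app (op (f ⁻¹ᵁ f ''ᵁ W.unop))
        (G.val.map (homOfLE (hVle f (f ''ᵁ W.unop))).op x) := by
    intro g
    refine (PresheafOfModules.naturality_apply g.val
      (homOfLE (f.preimage_image_eq W.unop).le).op x).symm.trans ?_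
    exact congrArg (g.val.app (op (f ⁻¹ᵁ f ''ᵁ W.unop))) (pmap₁ G.val.presheaf _ _ x)
  have h1 := congrArg (fun q : G ⟶ (pushforwardModules f).obj N =>
    q.val.app (op (f ''ᵁ W.unop)) x) hh
  have h2 := (key g₁).trans (h1.trans ((key g₂).symm))
  have h3 := congrArg (N.val.presheaf.map (homOfLE (f.preimage_image_eq W.unop).ge).op) h2
  exact ((pmap_self N.val.presheaf _ _ _).symm.trans h3).trans (pmap_self N.val.presheaf _ _ _)

variable {pulls : X.Modules ⥤ Y.Modules} (adj : pulls ⊣ pushforwardModules f)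

noncomputable def resComparison (G : X.Modules) : pulls.obj G ⟶ resObj f G :=
  (adj.homEquiv G (resObj f G)).symm (resUnit f G)

lemma unit_comp_resComparison (G : X.Modules) :
    adj.unit.app G ≫ (pushforwardModules f).map (resComparison f adj G) = resUnit f G :=
  (Adjunction.homEquiv_unit adj G (resObj f G) (resComparison f adj G)).symm.trans ((adj.homEquiv _ _).apply_symm_apply _)

lemma isIso_resComparison (G : X.Modules) : IsIso (resComparison f adj G) := by
  refine ⟨resDesc f G (adj.unit.app G), ?_, ?_⟩
  · apply (adj.homEquiv G (pulls.obj G)).injective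
    rw [Adjunction.homEquiv_unit, Adjunction.homEquiv_unit]
    rw [Functor.map_comp, ← Category.assoc, unit_comp_resComparison, resDesc_fac]
    simp
  · apply res_homext f G
    rw [Functor.map_comp, ← Category.assoc, resDesc_fac, unit_comp_resComparison]
    rw [CategoryTheory.Functor.map_id, Category.comp_id]

end DerivedQCoh

namespace DerivedQCoh

open Opposite

lemma subsingleton_of_isZero {Y : Scheme.{u}} {M : Y.Modules} (hM : IsZero M)
    (W : (Opens Y)ᵒᵖ) : Subsingleton (M.val.obj W) := by
  constructor
  intro a b
  have h0 : (𝟙 M : M ⟶ M) = 0 := hM.eq_of_src _ _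
  have ha := congrArg (fun q : M ⟶ M => q.val.app W a) h0
  have hb := congrArg (fun q : M ⟶ M => q.val.app W b) h0
  exact ha.trans hb.symm

lemma resUnit_app_bijective
    (X : Scheme.{u}) (n : ℕ) (U : Fin (n + 1) → Scheme.{u}) (u : ∀ i, U i ⟶ X)
    [∀ i, IsOpenImmersion (u i)]
    (hcover : ∀ x : X, ∃ i, x ∈ Set.range ((u i).base))
    (G : X.Modules)
    (hsub : ∀ (i : Fin (n+1)), i ≠ Fin.last n → ∀ (W' : Opens X),
      W' ≤ (u i).opensRange → Subsingleton (G.val.obj (op W')))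
    (V : Opens X) :
    Function.Bijective (fun x : G.val.presheaf.obj (op V) =>
      G.val.presheaf.map (homOfLE (hVle (u (Fin.last n)) V)).op x) := by
  classical
  set f := u (Fin.last n) with hf
  let F : TopCat.Sheaf AddCommGrpCat.{u} _ := ⟨G.val.presheaf, G.isSheaf⟩
  let W : ULift.{u} (Fin (n+1)) → Opens _ := fun i => (u i.down).opensRange ⊓ V
  have hWle : ∀ i, W i ≤ V := fun i => inf_le_right
  have hcoverV : V ≤ iSup W := by
    intro x hx
    obtain ⟨i, hi⟩ := hcover x
    exact Opens.mem_iSup.mpr ⟨⟨i⟩, ⟨hi, hx⟩⟩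
  have hWsub : ∀ i : ULift.{u} (Fin (n+1)), i.down ≠ Fin.last n → ∀ (W' : Opens X),
      W' ≤ W i → Subsingleton (F.1.obj (op W')) := fun i hi W' h =>
    hsub i.down hi W' (h.trans inf_le_left)
  have he : W ⟨Fin.last n⟩ = f ''ᵁ f ⁻¹ᵁ V :=
    (Scheme.Hom.image_preimage_eq_opensRange_inf f V).symm
  constructor
  · intro x y hxy
    apply TopCat.Sheaf.eq_of_locally_eq' F W V (fun i => homOfLE (hWle i)) hcoverV
    intro i
    by_cases hi : i.down = Fin.last n
    · obtain rfl : i = ⟨Fin.last n⟩ := by cases i; cases hi; rfl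
      calc F.1.map (homOfLE (hWle _)).op x
          = F.1.map (eqToHom he).op (F.1.map (homOfLE (hVle f V)).op x) :=
            (pmap₂ F.1 _ _ _ x).symm
        _ = F.1.map (eqToHom he).op (F.1.map (homOfLE (hVle f V)).op y) := congrArg _ hxy
        _ = F.1.map (homOfLE (hWle _)).op y := pmap₂ F.1 _ _ _ y
    · have := hWsub i hi (W i) le_rfl
      exact Subsingleton.elim _ _
  · intro z
    let sf : ∀ i, F.1.obj (op (W i)) := fun i =>
      if hi : i.down = Fin.last n then
        F.1.map (homOfLE (show W i ≤ f ''ᵁ f ⁻¹ᵁ V by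
          cases i; cases hi; exact he.le)).op z
      else 0
    have compat : TopCat.Presheaf.IsCompatible F.1 W sf := by
      intro i j
      by_cases hi : i.down = Fin.last n
      · by_cases hj : j.down = Fin.last n
        · obtain rfl : i = j := by cases i; cases j; cases hi; cases hj; rfl
          exact pmap₁ F.1 _ _ _
        · have := hWsub j hj (W i ⊓ W j) inf_le_right
          exact Subsingleton.elim _ _
      · have := hWsub i hi (W i ⊓ W j) inf_le_left
        exact Subsingleton.elim _ _
    obtain ⟨s, hs, -⟩ := TopCat.Sheaf.existsUnique_gluing' F W V
      (fun i => homOfLE (hWle i)) hcoverV sf compat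
    refine ⟨s, ?_⟩
    have h1 := hs ⟨Fin.last n⟩
    calc F.1.map (homOfLE (hVle f V)).op s
        = F.1.map (homOfLE he.ge).op (F.1.map (homOfLE (hWle ⟨Fin.last n⟩)).op s) :=
          (pmap₂ F.1 _ _ _ s).symm
      _ = F.1.map (homOfLE he.ge).op (sf ⟨Fin.last n⟩) := congrArg _ h1
      _ = z := by
          show F.1.map (homOfLE he.ge).op (dite _ _ _) = z
          rw [dif_pos rfl]
          exact pmap_self F.1 _ _ z


/-- Let `X` be a quasi-compact and separated scheme covered by
open subschemes `U i` (`i : Fin (n+1)`), the last of which is affine, with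
inclusions `u i : U i ⟶ X`.  The inverse image functors `u_i^*` (restriction to
`U i`) are encoded as left adjoints `pulls i` of the direct image functors
`(u i)_*` on sheaves of modules.  Let `G` be a quasi-coherent sheaf on `X` whose
restriction `G|U_i = (pulls i).obj G` is zero for every `i` other than the last
one.  Then the unit morphism `c : G ⟶ u_{n*}(G|U_n)` of the adjunction
`(u_n^*, u_{n*})` is an isomorphism (of quasi-coherent sheaves on `X`). -/
theorem unit_of_last_affine_open_isIso
    (X : Scheme.{u}) [CompactSpace X] [X.IsSeparated]
    (n : ℕ) (U : Fin (n + 1) → Scheme.{u}) (u : ∀ i, U i ⟶ X)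
    [∀ i, IsOpenImmersion (u i)] [IsAffine (U (Fin.last n))]
    (hcover : ∀ x : X, ∃ i, x ∈ Set.range ((u i).base))
    (pulls : ∀ i, X.Modules ⥤ (U i).Modules)
    (adjs : ∀ i, pulls i ⊣ pushforwardModules (u i))
    (G : X.Modules) (hG : G.IsQuasicoherent)
    (hvanish : ∀ i, i ≠ Fin.last n → IsZero ((pulls i).obj G)) :
    IsIso ((adjs (Fin.last n)).unit.app G) := by
  have hsub : ∀ (i : Fin (n+1)), i ≠ Fin.last n → ∀ (W' : Opens X),
      W' ≤ (u i).opensRange → Subsingleton (G.val.obj (op W')) := by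
    intro i hi W' hW'
    have hiso := isIso_resComparison (u i) (adjs i) G
    have hz : IsZero (resObj (u i) G) :=
      (hvanish i hi).of_iso (asIso (resComparison (u i) (adjs i) G)).symm
    have hz2 := subsingleton_of_isZero hz (op ((u i) ⁻¹ᵁ W'))
    have e : (u i) ''ᵁ ((u i) ⁻¹ᵁ W') = W' := by
      rw [Scheme.Hom.image_preimage_eq_opensRange_inf]
      exact inf_eq_right.mpr hW'
    rw [← e]
    exact hz2
  have hbij := resUnit_app_bijective X n U u hcover G hsub
  have happiso : ∀ V : (Opens X)ᵒᵖ,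
      IsIso ((resUnit (u (Fin.last n)) G).val.app V) := by
    intro V
    rw [ConcreteCategory.isIso_iff_bijective]
    exact hbij V.unop
  let e : G.val ≅ ((pushforwardModules (u (Fin.last n))).obj
      (resObj (u (Fin.last n)) G)).val :=
    PresheafOfModules.isoMk (fun V => asIso ((resUnit (u (Fin.last n)) G).val.app V))
      (fun V V' i => (resUnit (u (Fin.last n)) G).val.naturality i)
  have hval : IsIso (resUnit (u (Fin.last n)) G).val := by
    have h' : (resUnit (u (Fin.last n)) G).val = e.hom := by
      apply PresheafOfModules.hom_ext; intro V; rfl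
    rw [h']; infer_instance
  have hres : IsIso (resUnit (u (Fin.last n)) G) := by
    have : IsIso ((Scheme.Modules.toPresheafOfModules X).map (resUnit (u (Fin.last n)) G)) := hval
    exact isIso_of_reflects_iso _ (Scheme.Modules.toPresheafOfModules X)
  have hiso := isIso_resComparison (u (Fin.last n)) (adjs (Fin.last n)) G
  have hu : (adjs (Fin.last n)).unit.app G =
      resUnit (u (Fin.last n)) G ≫ inv ((pushforwardModules (u (Fin.last n))).map
        (resComparison (u (Fin.last n)) (adjs (Fin.last n)) G)) := by
    rw [← unit_comp_resComparison (u (Fin.last n)) (adjs (Fin.last n)) G]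
    simp
  rw [hu]
  infer_instance


end DerivedQCoh
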